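/- Searles' operators on the span of standard Young tableaux of a fixed shape μ ⊢ n — where π_i · S = S if i is strictly left of i+1 in S, π_i · S = 0 if i and i+1 are in the same column of S, and π_i · S = s_i·S if i is strictly right of i+1 — satisfy the 0-Hecke relations π_i² = π_i, π_i π_{i+1} π_i = π_{i+1} π_i π_{i+1}, and π_i π_j = π_j π_i for |i−j| ≥ 2, making X_μ an H_n(0)-module. -/
import Mathlib


/-- `c` is a cell of the Young diagram of the partition `μ` (rows and columns 0-based). -/
def IsCell (μ : List ℕ) (c : ℕ × ℕ) : Prop := c.2 < μ.getD c.1 0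

/-- `f` is a standard Young tableau of shape `μ ⊢ n` (cells outside the diagram carry `0`). -/
def IsSYTgen (n : ℕ) (μ : List ℕ) (f : ℕ × ℕ → ℕ) : Prop :=
  (∀ c, ¬ IsCell μ c → f c = 0) ∧
  (∀ c, IsCell μ c → 1 ≤ f c ∧ f c ≤ n) ∧
  (∀ k, 1 ≤ k → k ≤ n → ∃! c, IsCell μ c ∧ f c = k) ∧
  (∀ i j, IsCell μ (i, j + 1) → f (i, j) < f (i, j + 1)) ∧
  (∀ i j, IsCell μ (i + 1, j) → f (i, j) < f (i + 1, j))

open Classical in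
/-- Searles' 0-Hecke operator `π_i` on a standard Young tableau: `some S` means the
result is the tableau `S`, `none` means the result is `0`. -/
noncomputable def searlesStepG (μ : List ℕ) (i : ℕ) (f : ℕ × ℕ → ℕ) : Option (ℕ × ℕ → ℕ) :=
  if ∃ c c', IsCell μ c ∧ IsCell μ c' ∧ f c = i ∧ f c' = i + 1 ∧ c.2 < c'.2 then some f
  else if ∃ c c', IsCell μ c ∧ IsCell μ c' ∧ f c = i ∧ f c' = i + 1 ∧ c.2 = c'.2 then none
  else some (fun c => if f c = i then i + 1 else if f c = i + 1 then i else f c)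

/-- Searles' operator `π_i`, extended linearly to the span of tableaux. -/
noncomputable def piOpG (μ : List ℕ) (i : ℕ) :
    ((ℕ × ℕ → ℕ) →₀ ℂ) →ₗ[ℂ] ((ℕ × ℕ → ℕ) →₀ ℂ) :=
  Finsupp.lsum ℂ fun f => (searlesStepG μ i f).elim 0 fun f' => Finsupp.lsingle f'

/-! ### Auxiliary machinery -/

/-- The value transposition swapping `i` and `i+1`. -/
def swv (i v : ℕ) : ℕ := if v = i then i + 1 else if v = i + 1 then i else v

lemma swv_swv (i v : ℕ) : swv i (swv i v) = v := by unfold swv; split_ifs <;> omega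

set_option maxHeartbeats 1000000 in
lemma swv_braid (i v : ℕ) : swv i (swv (i+1) (swv i v)) = swv (i+1) (swv i (swv (i+1) v)) := by
  unfold swv; split_ifs <;> omega

lemma swv_comm (i j v : ℕ) (h : i + 2 ≤ j ∨ j + 2 ≤ i) :
    swv i (swv j v) = swv j (swv i v) := by unfold swv; split_ifs <;> omega

lemma swv_at_i (i : ℕ) : swv i i = i + 1 := by unfold swv; split_ifs <;> omega
lemma swv_at_i1 (i : ℕ) : swv i (i+1) = i := by unfold swv; split_ifs <;> omega
lemma swv_at_other (i k : ℕ) (h1 : k ≠ i) (h2 : k ≠ i+1) : swv i k = k := by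
  unfold swv; split_ifs <;> omega

lemma swv_lt {i u v : ℕ} (h : u < v) (hbad : ¬(u = i ∧ v = i + 1)) :
    swv i u < swv i v := by unfold swv; split_ifs <;> omega

/-- `p` is the unique cell of the diagram carrying the value `k`. -/
def Uni (μ : List ℕ) (f : ℕ × ℕ → ℕ) (k : ℕ) (p : ℕ × ℕ) : Prop :=
  IsCell μ p ∧ f p = k ∧ ∀ q, IsCell μ q → f q = k → q = p

lemma Uni.swv' {μ : List ℕ} {f : ℕ × ℕ → ℕ} {k : ℕ} {p : ℕ × ℕ} {i : ℕ}
    (h : Uni μ f (swv i k) p) : Uni μ (fun c => swv i (f c)) k p := by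
  obtain ⟨h1, h2, h3⟩ := h
  refine ⟨h1, by show swv i (f p) = k; rw [h2, swv_swv], fun q hq hfq => h3 q hq ?_⟩
  have := congrArg (swv i) (show swv i (f q) = k from hfq)
  rwa [swv_swv] at this

lemma Uni.swv_lo {μ : List ℕ} {f : ℕ × ℕ → ℕ} {i : ℕ} {p : ℕ × ℕ}
    (h : Uni μ f (i+1) p) : Uni μ (fun c => swv i (f c)) i p :=
  Uni.swv' (by rwa [swv_at_i])

lemma Uni.swv_hi {μ : List ℕ} {f : ℕ × ℕ → ℕ} {i : ℕ} {p : ℕ × ℕ}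
    (h : Uni μ f i p) : Uni μ (fun c => swv i (f c)) (i+1) p :=
  Uni.swv' (by rwa [swv_at_i1])

lemma Uni.swv_other {μ : List ℕ} {f : ℕ × ℕ → ℕ} {k : ℕ} {p : ℕ × ℕ} (i : ℕ)
    (h : Uni μ f k p) (h1 : k ≠ i) (h2 : k ≠ i+1) :
    Uni μ (fun c => swv i (f c)) k p := Uni.swv' (by rwa [swv_at_other i k h1 h2])

lemma step_L {μ : List ℕ} {i : ℕ} {f : ℕ × ℕ → ℕ} {a b : ℕ × ℕ}
    (ha : Uni μ f i a) (hb : Uni μ f (i+1) b) (hab : a.2 < b.2) :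
    searlesStepG μ i f = some f := by
  unfold searlesStepG
  rw [if_pos ⟨a, b, ha.1, hb.1, ha.2.1, hb.2.1, hab⟩]

lemma step_E {μ : List ℕ} {i : ℕ} {f : ℕ × ℕ → ℕ} {a b : ℕ × ℕ}
    (ha : Uni μ f i a) (hb : Uni μ f (i+1) b) (hab : a.2 = b.2) :
    searlesStepG μ i f = none := by
  unfold searlesStepG
  rw [if_neg, if_pos ⟨a, b, ha.1, hb.1, ha.2.1, hb.2.1, hab⟩]
  rintro ⟨c, c', hc, hc', hfc, hfc', hlt⟩
  rw [ha.2.2 c hc hfc, hb.2.2 c' hc' hfc'] at hlt; omega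

lemma step_R {μ : List ℕ} {i : ℕ} {f : ℕ × ℕ → ℕ} {a b : ℕ × ℕ}
    (ha : Uni μ f i a) (hb : Uni μ f (i+1) b) (hab : b.2 < a.2) :
    searlesStepG μ i f = some (fun c => swv i (f c)) := by
  unfold searlesStepG
  rw [if_neg, if_neg]
  · rfl
  · rintro ⟨c, c', hc, hc', hfc, hfc', heq⟩
    rw [ha.2.2 c hc hfc, hb.2.2 c' hc' hfc'] at heq; omega
  · rintro ⟨c, c', hc, hc', hfc, hfc', hlt⟩
    rw [ha.2.2 c hc hfc, hb.2.2 c' hc' hfc'] at hlt; omega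

lemma piOpG_single (μ : List ℕ) (i : ℕ) (f : ℕ × ℕ → ℕ) (z : ℂ) :
    piOpG μ i (Finsupp.single f z) =
      (searlesStepG μ i f).elim 0 (fun g => Finsupp.single g z) := by
  unfold piOpG
  rw [Finsupp.lsum_single]
  cases searlesStepG μ i f <;> simp

lemma pi_of_L {μ : List ℕ} {i : ℕ} {f : ℕ × ℕ → ℕ} {a b : ℕ × ℕ} (z : ℂ)
    (ha : Uni μ f i a) (hb : Uni μ f (i+1) b) (hab : a.2 < b.2) :
    piOpG μ i (Finsupp.single f z) = Finsupp.single f z := by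
  rw [piOpG_single, step_L ha hb hab]; rfl

lemma pi_of_E {μ : List ℕ} {i : ℕ} {f : ℕ × ℕ → ℕ} {a b : ℕ × ℕ} (z : ℂ)
    (ha : Uni μ f i a) (hb : Uni μ f (i+1) b) (hab : a.2 = b.2) :
    piOpG μ i (Finsupp.single f z) = 0 := by
  rw [piOpG_single, step_E ha hb hab]; rfl

lemma pi_of_R {μ : List ℕ} {i : ℕ} {f : ℕ × ℕ → ℕ} {a b : ℕ × ℕ} (z : ℂ)
    (ha : Uni μ f i a) (hb : Uni μ f (i+1) b) (hab : b.2 < a.2) :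
    piOpG μ i (Finsupp.single f z) = Finsupp.single (fun c => swv i (f c)) z := by
  rw [piOpG_single, step_R ha hb hab]; rfl

lemma exists_uni {n : ℕ} {μ : List ℕ} {f : ℕ × ℕ → ℕ} (h : IsSYTgen n μ f) {k : ℕ}
    (h1 : 1 ≤ k) (h2 : k ≤ n) : ∃ p, Uni μ f k p := by
  obtain ⟨p, ⟨hp1, hp2⟩, hp3⟩ := h.2.2.1 k h1 h2
  exact ⟨p, hp1, hp2, fun q hq hfq => hp3 q ⟨hq, hfq⟩⟩

lemma getD_mono {μ : List ℕ} (h : μ.Chain' (· ≥ ·)) (r : ℕ) :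
    μ.getD (r+1) 0 ≤ μ.getD r 0 := by
  by_cases hr : r + 1 < μ.length
  · rw [List.getD_eq_getElem μ 0 hr, List.getD_eq_getElem μ 0 (by omega)]
    exact List.isChain_iff_getElem.mp h r (by omega)
  · rw [List.getD_eq_default μ 0 (by omega)]
    exact Nat.zero_le _

lemma syt_swap {n : ℕ} {μ : List ℕ} {f : ℕ × ℕ → ℕ} {i : ℕ} {a b : ℕ × ℕ}
    (hμ : μ.Chain' (· ≥ ·)) (h : IsSYTgen n μ f) (hi : 1 ≤ i) (hin : i + 1 ≤ n)
    (ha : Uni μ f i a) (hb : Uni μ f (i+1) b) (hab : b.2 < a.2) :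
    IsSYTgen n μ (fun c => swv i (f c)) := by
  obtain ⟨h0, h1, h2, h3, h4⟩ := h
  refine ⟨?_, ?_, ?_, ?_, ?_⟩
  · intro c hc
    show swv i (f c) = 0
    have h5 := h0 c hc
    unfold swv; split_ifs <;> omega
  · intro c hc
    have := h1 c hc
    show 1 ≤ swv i (f c) ∧ swv i (f c) ≤ n
    unfold swv; split_ifs <;> omega
  · intro k hk1 hk2
    have hsw1 : 1 ≤ swv i k := by unfold swv; split_ifs <;> omega
    have hsw2 : swv i k ≤ n := by unfold swv; split_ifs <;> omega
    obtain ⟨p, ⟨hp1, hp2⟩, hp3⟩ := h2 (swv i k) hsw1 hsw2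
    refine ⟨p, ⟨hp1, by show swv i (f p) = k; rw [hp2, swv_swv]⟩, ?_⟩
    rintro q ⟨hq1, hq2⟩
    refine hp3 q ⟨hq1, ?_⟩
    have := congrArg (swv i) (show swv i (f q) = k from hq2)
    rwa [swv_swv] at this
  · intro r j hc
    have hc' : IsCell μ (r, j) := by
      simp only [IsCell] at hc ⊢; omega
    have hlt := h3 r j hc
    by_cases hbad : f (r, j) = i ∧ f (r, j+1) = i + 1
    · exfalso
      have e1 := ha.2.2 (r, j) hc' hbad.1
      have e2 := hb.2.2 (r, j+1) hc hbad.2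
      have e3 : a.2 = j := by rw [← e1]
      have e4 : b.2 = j + 1 := by rw [← e2]
      omega
    · exact swv_lt hlt hbad
  · intro r j hc
    have hc' : IsCell μ (r, j) := by
      have := getD_mono hμ r
      simp only [IsCell] at hc ⊢; omega
    have hlt := h4 r j hc
    by_cases hbad : f (r, j) = i ∧ f (r + 1, j) = i + 1
    · exfalso
      have e1 := ha.2.2 (r, j) hc' hbad.1
      have e2 := hb.2.2 (r+1, j) hc hbad.2
      have e3 : a.2 = j := by rw [← e1]
      have e4 : b.2 = j := by rw [← e2]
      omega
    · exact swv_lt hlt hbad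

lemma eq_on_supported {s : Set (ℕ × ℕ → ℕ)}
    (A B : ((ℕ × ℕ → ℕ) →₀ ℂ) →ₗ[ℂ] ((ℕ × ℕ → ℕ) →₀ ℂ))
    (h : ∀ f ∈ s, A (Finsupp.single f 1) = B (Finsupp.single f 1)) :
    ∀ v ∈ Finsupp.supported ℂ ℂ s, A v = B v := by
  intro v hv
  rw [Finsupp.supported_eq_span_single] at hv
  induction hv using Submodule.span_induction with
  | mem x hx => obtain ⟨f, hf, rfl⟩ := hx; exact h f hf
  | zero => simp
  | add x y _ _ hx hy => simp [map_add, hx, hy]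
  | smul a x _ hx => simp [map_smul, hx]

lemma mem_on_supported {s : Set (ℕ × ℕ → ℕ)}
    (A : ((ℕ × ℕ → ℕ) →₀ ℂ) →ₗ[ℂ] ((ℕ × ℕ → ℕ) →₀ ℂ))
    (h : ∀ f ∈ s, A (Finsupp.single f 1) ∈ Finsupp.supported ℂ ℂ s) :
    ∀ v ∈ Finsupp.supported ℂ ℂ s, A v ∈ Finsupp.supported ℂ ℂ s := by
  intro v hv
  rw [Finsupp.supported_eq_span_single] at hv
  induction hv using Submodule.span_induction with
  | mem x hx => obtain ⟨f, hf, rfl⟩ := hx; exact h f hf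
  | zero => simp
  | add x y _ _ hx hy => rw [map_add]; exact add_mem hx hy
  | smul a x _ hx => rw [map_smul]; exact Submodule.smul_mem _ a hx

lemma mem_single {n : ℕ} {μ : List ℕ} {f : ℕ × ℕ → ℕ} {i : ℕ}
    (hμc : μ.Chain' (· ≥ ·)) (h : IsSYTgen n μ f) (hi : 1 ≤ i) (hin : i + 1 ≤ n) :
    piOpG μ i (Finsupp.single f 1) ∈ Finsupp.supported ℂ ℂ {f | IsSYTgen n μ f} := by
  obtain ⟨a, ua⟩ := exists_uni h (k := i) hi (by omega)
  obtain ⟨b, ub⟩ := exists_uni h (k := i+1) (by omega) hin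
  rcases lt_trichotomy a.2 b.2 with hab | hab | hab
  · rw [pi_of_L 1 ua ub hab]
    exact Finsupp.single_mem_supported ℂ 1 h
  · rw [pi_of_E 1 ua ub hab]
    exact zero_mem _
  · rw [pi_of_R 1 ua ub hab]
    exact Finsupp.single_mem_supported ℂ 1 (syt_swap hμc h hi hin ua ub hab)

lemma idem_single {n : ℕ} {μ : List ℕ} {f : ℕ × ℕ → ℕ} {i : ℕ}
    (h : IsSYTgen n μ f) (hi : 1 ≤ i) (hin : i + 1 ≤ n) :
    piOpG μ i (piOpG μ i (Finsupp.single f 1)) = piOpG μ i (Finsupp.single f 1) := by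
  obtain ⟨a, ua⟩ := exists_uni h (k := i) hi (by omega)
  obtain ⟨b, ub⟩ := exists_uni h (k := i+1) (by omega) hin
  rcases lt_trichotomy a.2 b.2 with hab | hab | hab
  · simp only [pi_of_L 1 ua ub hab]
  · simp only [pi_of_E 1 ua ub hab, map_zero]
  · have ua1 : Uni μ (fun x => swv i (f x)) i b := ub.swv_lo
    have ub1 : Uni μ (fun x => swv i (f x)) (i+1) a := ua.swv_hi
    simp only [pi_of_R 1 ua ub hab, pi_of_L 1 ua1 ub1 hab]

lemma braid_single {n : ℕ} {μ : List ℕ} {f : ℕ × ℕ → ℕ} {i : ℕ}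
    (h : IsSYTgen n μ f) (hi : 1 ≤ i) (hin : i + 1 + 1 ≤ n) :
    piOpG μ i (piOpG μ (i+1) (piOpG μ i (Finsupp.single f 1))) =
      piOpG μ (i+1) (piOpG μ i (piOpG μ (i+1) (Finsupp.single f 1))) := by
  obtain ⟨a, ua⟩ := exists_uni h (k := i) hi (by omega)
  obtain ⟨b, ub⟩ := exists_uni h (k := i+1) (by omega) (by omega)
  obtain ⟨c, uc⟩ := exists_uni h (k := i+1+1) (by omega) hin
  rcases lt_trichotomy a.2 b.2 with hab | hab | hab
  · rcases lt_trichotomy b.2 c.2 with hbc | hbc | hbc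
    · simp only [pi_of_L 1 ua ub hab, pi_of_L 1 ub uc hbc]
    · simp only [pi_of_L 1 ua ub hab, pi_of_E 1 ub uc hbc, map_zero]
    · have ua' : Uni μ (fun x => swv (i+1) (f x)) i a := ua.swv_other (i+1) (by omega) (by omega)
      have ub' : Uni μ (fun x => swv (i+1) (f x)) (i+1) c := uc.swv_lo
      have uc' : Uni μ (fun x => swv (i+1) (f x)) (i+1+1) b := ub.swv_hi
      rcases lt_trichotomy a.2 c.2 with hac | hac | hac
      · simp only [pi_of_L 1 ua ub hab, pi_of_R 1 ub uc hbc,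
          pi_of_L 1 ua' ub' hac, pi_of_L 1 ub' uc' hbc]
      · simp only [pi_of_L 1 ua ub hab, pi_of_R 1 ub uc hbc,
          pi_of_E 1 ua' ub' hac, map_zero]
      · have va : Uni μ (fun x => swv i (swv (i+1) (f x))) i c := ub'.swv_lo
        have vb : Uni μ (fun x => swv i (swv (i+1) (f x))) (i+1) a := ua'.swv_hi
        have vc : Uni μ (fun x => swv i (swv (i+1) (f x))) (i+1+1) b :=
          uc'.swv_other i (by omega) (by omega)
        simp only [pi_of_L 1 ua ub hab, pi_of_R 1 ub uc hbc,
          pi_of_R 1 ua' ub' hac, pi_of_L 1 vb vc hab]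
  · rcases lt_trichotomy b.2 c.2 with hbc | hbc | hbc
    · simp only [pi_of_E 1 ua ub hab, pi_of_L 1 ub uc hbc, map_zero]
    · simp only [pi_of_E 1 ua ub hab, pi_of_E 1 ub uc hbc, map_zero]
    · have ua' : Uni μ (fun x => swv (i+1) (f x)) i a := ua.swv_other (i+1) (by omega) (by omega)
      have ub' : Uni μ (fun x => swv (i+1) (f x)) (i+1) c := uc.swv_lo
      have uc' : Uni μ (fun x => swv (i+1) (f x)) (i+1+1) b := ub.swv_hi
      have va : Uni μ (fun x => swv i (swv (i+1) (f x))) i c := ub'.swv_lo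
      have vb : Uni μ (fun x => swv i (swv (i+1) (f x))) (i+1) a := ua'.swv_hi
      have vc : Uni μ (fun x => swv i (swv (i+1) (f x))) (i+1+1) b :=
        uc'.swv_other i (by omega) (by omega)
      simp only [pi_of_E 1 ua ub hab, pi_of_R 1 ub uc hbc,
        pi_of_R 1 ua' ub' (show c.2 < a.2 by omega), pi_of_E 1 vb vc hab, map_zero]
  · have ua1 : Uni μ (fun x => swv i (f x)) i b := ub.swv_lo
    have ub1 : Uni μ (fun x => swv i (f x)) (i+1) a := ua.swv_hi
    have uc1 : Uni μ (fun x => swv i (f x)) (i+1+1) c := uc.swv_other i (by omega) (by omega)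
    rcases lt_trichotomy b.2 c.2 with hbc | hbc | hbc
    · rcases lt_trichotomy a.2 c.2 with hac | hac | hac
      · simp only [pi_of_R 1 ua ub hab, pi_of_L 1 ub1 uc1 hac,
          pi_of_L 1 ua1 ub1 hab, pi_of_L 1 ub uc hbc]
      · simp only [pi_of_R 1 ua ub hab, pi_of_E 1 ub1 uc1 hac,
          pi_of_L 1 ub uc hbc, map_zero]
      · have wa : Uni μ (fun x => swv (i+1) (swv i (f x))) i b :=
          ua1.swv_other (i+1) (by omega) (by omega)
        have wb : Uni μ (fun x => swv (i+1) (swv i (f x))) (i+1) c := uc1.swv_lo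
        have wc : Uni μ (fun x => swv (i+1) (swv i (f x))) (i+1+1) a := ub1.swv_hi
        simp only [pi_of_L 1 ub uc hbc, pi_of_R 1 ua ub hab,
          pi_of_R 1 ub1 uc1 hac, pi_of_L 1 wa wb hbc]
    · have wa : Uni μ (fun x => swv (i+1) (swv i (f x))) i b :=
        ua1.swv_other (i+1) (by omega) (by omega)
      have wb : Uni μ (fun x => swv (i+1) (swv i (f x))) (i+1) c := uc1.swv_lo
      have wc : Uni μ (fun x => swv (i+1) (swv i (f x))) (i+1+1) a := ub1.swv_hi
      simp only [pi_of_R 1 ua ub hab, pi_of_R 1 ub1 uc1 (show c.2 < a.2 by omega),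
        pi_of_E 1 wa wb hbc, pi_of_E 1 ub uc hbc, map_zero]
    · have wa : Uni μ (fun x => swv (i+1) (swv i (f x))) i b :=
        ua1.swv_other (i+1) (by omega) (by omega)
      have wb : Uni μ (fun x => swv (i+1) (swv i (f x))) (i+1) c := uc1.swv_lo
      have wc : Uni μ (fun x => swv (i+1) (swv i (f x))) (i+1+1) a := ub1.swv_hi
      have xa : Uni μ (fun x => swv (i+1) (f x)) i a := ua.swv_other (i+1) (by omega) (by omega)
      have xb : Uni μ (fun x => swv (i+1) (f x)) (i+1) c := uc.swv_lo
      have xc : Uni μ (fun x => swv (i+1) (f x)) (i+1+1) b := ub.swv_hi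
      have ya : Uni μ (fun x => swv i (swv (i+1) (f x))) i c := xb.swv_lo
      have yb : Uni μ (fun x => swv i (swv (i+1) (f x))) (i+1) a := xa.swv_hi
      have yc : Uni μ (fun x => swv i (swv (i+1) (f x))) (i+1+1) b :=
        xc.swv_other i (by omega) (by omega)
      simp only [pi_of_R 1 ua ub hab, pi_of_R 1 ub1 uc1 (show c.2 < a.2 by omega),
        pi_of_R 1 wa wb hbc, pi_of_R 1 ub uc hbc,
        pi_of_R 1 xa xb (show c.2 < a.2 by omega), pi_of_R 1 yb yc hab]
      congr 1
      funext x
      exact swv_braid i (f x)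

lemma comm_single {n : ℕ} {μ : List ℕ} {f : ℕ × ℕ → ℕ} {i j : ℕ}
    (h : IsSYTgen n μ f) (hi : 1 ≤ i) (hin : i + 1 ≤ n) (hj : 1 ≤ j) (hjn : j + 1 ≤ n)
    (hij : i + 2 ≤ j ∨ j + 2 ≤ i) :
    piOpG μ i (piOpG μ j (Finsupp.single f 1)) =
      piOpG μ j (piOpG μ i (Finsupp.single f 1)) := by
  obtain ⟨a, ua⟩ := exists_uni h (k := i) hi (by omega)
  obtain ⟨b, ub⟩ := exists_uni h (k := i+1) (by omega) hin
  obtain ⟨c, uc⟩ := exists_uni h (k := j) hj (by omega)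
  obtain ⟨d, ud⟩ := exists_uni h (k := j+1) (by omega) hjn
  have ua2 : Uni μ (fun x => swv j (f x)) i a := ua.swv_other j (by omega) (by omega)
  have ub2 : Uni μ (fun x => swv j (f x)) (i+1) b := ub.swv_other j (by omega) (by omega)
  have uc1 : Uni μ (fun x => swv i (f x)) j c := uc.swv_other i (by omega) (by omega)
  have ud1 : Uni μ (fun x => swv i (f x)) (j+1) d := ud.swv_other i (by omega) (by omega)
  rcases lt_trichotomy a.2 b.2 with h1 | h1 | h1 <;>
    rcases lt_trichotomy c.2 d.2 with h2 | h2 | h2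
  · simp only [pi_of_L 1 ua ub h1, pi_of_L 1 uc ud h2]
  · simp only [pi_of_L 1 ua ub h1, pi_of_E 1 uc ud h2, map_zero]
  · simp only [pi_of_L 1 ua ub h1, pi_of_R 1 uc ud h2, pi_of_L 1 ua2 ub2 h1]
  · simp only [pi_of_E 1 ua ub h1, pi_of_L 1 uc ud h2, map_zero]
  · simp only [pi_of_E 1 ua ub h1, pi_of_E 1 uc ud h2, map_zero]
  · simp only [pi_of_E 1 ua ub h1, pi_of_R 1 uc ud h2, pi_of_E 1 ua2 ub2 h1, map_zero]
  · simp only [pi_of_R 1 ua ub h1, pi_of_L 1 uc ud h2, pi_of_L 1 uc1 ud1 h2]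
  · simp only [pi_of_R 1 ua ub h1, pi_of_E 1 uc ud h2, pi_of_E 1 uc1 ud1 h2, map_zero]
  · simp only [pi_of_R 1 ua ub h1, pi_of_R 1 uc ud h2,
      pi_of_R 1 uc1 ud1 h2, pi_of_R 1 ua2 ub2 h1]
    congr 1
    funext x
    exact swv_comm i j (f x) hij

/-- Searles' operators on the span of standard Young tableaux of a fixed shape `μ ⊢ n`
preserve that span and satisfy the 0-Hecke relations `π_i² = π_i`,
`π_i π_{i+1} π_i = π_{i+1} π_i π_{i+1}`, and `π_i π_j = π_j π_i` for `|i-j| ≥ 2`,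
making `X_μ` an `H_n(0)`-module. -/
theorem stmt_14 (n : ℕ) (μ : List ℕ)
    (hμ : μ.Chain' (· ≥ ·) ∧ (∀ x ∈ μ, 0 < x) ∧ μ.sum = n) :
    let W : Submodule ℂ ((ℕ × ℕ → ℕ) →₀ ℂ) :=
      Finsupp.supported ℂ ℂ {f | IsSYTgen n μ f}
    (∀ i, 1 ≤ i → i ≤ n - 1 → ∀ v ∈ W, piOpG μ i v ∈ W) ∧
    (∀ i, 1 ≤ i → i ≤ n - 1 → ∀ v ∈ W, piOpG μ i (piOpG μ i v) = piOpG μ i v) ∧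
    (∀ i, 1 ≤ i → i + 1 ≤ n - 1 → ∀ v ∈ W,
      piOpG μ i (piOpG μ (i + 1) (piOpG μ i v)) =
        piOpG μ (i + 1) (piOpG μ i (piOpG μ (i + 1) v))) ∧
    (∀ i j, 1 ≤ i → i ≤ n - 1 → 1 ≤ j → j ≤ n - 1 → (i + 2 ≤ j ∨ j + 2 ≤ i) →
      ∀ v ∈ W, piOpG μ i (piOpG μ j v) = piOpG μ j (piOpG μ i v)) := by
  obtain ⟨hchain, hpos, hsum⟩ := hμ
  intro W
  refine ⟨?_, ?_, ?_, ?_⟩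
  · intro i hi1 hi2 v hv
    exact mem_on_supported (piOpG μ i)
      (fun f hf => mem_single hchain hf hi1 (by omega)) v hv
  · intro i hi1 hi2 v hv
    exact eq_on_supported (piOpG μ i ∘ₗ piOpG μ i) (piOpG μ i)
      (fun f hf => idem_single hf hi1 (by omega)) v hv
  · intro i hi1 hi2 v hv
    exact eq_on_supported
      (piOpG μ i ∘ₗ piOpG μ (i+1) ∘ₗ piOpG μ i)
      (piOpG μ (i+1) ∘ₗ piOpG μ i ∘ₗ piOpG μ (i+1))
      (fun f hf => braid_single hf hi1 (by omega)) v hv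
  · intro i j hi1 hi2 hj1 hj2 hij v hv
    exact eq_on_supported (piOpG μ i ∘ₗ piOpG μ j) (piOpG μ j ∘ₗ piOpG μ i)
      (fun f hf => comm_single hf hi1 (by omega) hj1 (by omega) hij) v hv
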